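/- For every μ ∈ ℝ and σ > 0, the Weyl 1-form φ = (1/2)·C_{ijk}g^{jk}dθ^i of the univariate Gaussian family in the coordinates (μ, σ²) has μ-component (1/2)·[(∫ s₁³ φ_{μ,σ²} dx)·σ² + (∫ s₁ s₂² φ_{μ,σ²} dx)·2σ⁴] = 0 and σ²-component (1/2)·[(∫ s₂ s₁² φ_{μ,σ²} dx)·σ² + (∫ s₂³ φ_{μ,σ²} dx)·2σ⁴] = 3/(2σ²), where σ² and 2σ⁴ are the diagonal entries of the inverse Fisher metric of the family. -/

import Mathlib

open MeasureTheory Real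

/-- The density of the univariate Gaussian distribution N(μ,σ²). -/
noncomputable def gaussPdf (μ σ x : ℝ) : ℝ :=
  1 / (Real.sqrt (2 * Real.pi) * σ) * Real.exp (-(x - μ) ^ 2 / (2 * σ ^ 2))

/-- The score component s₁ = ∂_μ l of the univariate Gaussian log-likelihood. -/
noncomputable def score1 (μ σ x : ℝ) : ℝ := (x - μ) / σ ^ 2

/-- The score component s₂ = ∂_{σ²} l of the univariate Gaussian log-likelihood. -/
noncomputable def score2 (μ σ x : ℝ) : ℝ := (x - μ) ^ 2 / (2 * σ ^ 4) - 1 / (2 * σ ^ 2)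


noncomputable def gaussMoment (b : ℝ) (n : ℕ) : ℝ := ∫ x : ℝ, x ^ n * Real.exp (-b * x ^ 2)

lemma integrable_pow_gauss {b : ℝ} (hb : 0 < b) (n : ℕ) :
    Integrable fun x : ℝ => x ^ n * Real.exp (-b * x ^ 2) := by
  have h : (-1 : ℝ) < (n : ℝ) := lt_of_lt_of_le neg_one_lt_zero (Nat.cast_nonneg n)
  simpa [Real.rpow_natCast] using integrable_rpow_mul_exp_neg_mul_sq hb h

lemma gaussMoment_step {b : ℝ} (hb : 0 < b) (n : ℕ) :
    (2 * b) * gaussMoment b (n + 2) = (n + 1 : ℝ) * gaussMoment b n := by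
  have hder : ∀ x : ℝ, HasDerivAt (fun x : ℝ => x ^ (n + 1) * Real.exp (-b * x ^ 2))
      ((n + 1 : ℝ) * (x ^ n * Real.exp (-b * x ^ 2))
        - (2 * b) * (x ^ (n + 2) * Real.exp (-b * x ^ 2))) x := by
    intro x
    have h1 := hasDerivAt_pow (n + 1) x
    have h2 : HasDerivAt (fun x : ℝ => Real.exp (-b * x ^ 2))
        (Real.exp (-b * x ^ 2) * (-b * (2 * x))) x := by
      simpa using ((hasDerivAt_pow 2 x).const_mul (-b)).exp
    have h : HasDerivAt (fun x : ℝ => x ^ (n + 1) * Real.exp (-b * x ^ 2)) _ x := h1.mul h2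
    convert h using 1
    push_cast
    ring
  have hint : Integrable fun x : ℝ => (n + 1 : ℝ) * (x ^ n * Real.exp (-b * x ^ 2))
      - (2 * b) * (x ^ (n + 2) * Real.exp (-b * x ^ 2)) :=
    ((integrable_pow_gauss hb n).const_mul _).sub ((integrable_pow_gauss hb (n + 2)).const_mul _)
  have h0 := integral_eq_zero_of_hasDerivAt_of_integrable hder hint (integrable_pow_gauss hb (n + 1))
  rw [integral_sub ((integrable_pow_gauss hb n).const_mul _)
      ((integrable_pow_gauss hb (n + 2)).const_mul _),
    integral_const_mul, integral_const_mul] at h0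
  unfold gaussMoment
  linarith

lemma gaussMoment_one {b : ℝ} (hb : 0 < b) : gaussMoment b 1 = 0 := by
  have hder : ∀ x : ℝ, HasDerivAt (fun x : ℝ => Real.exp (-b * x ^ 2))
      ((-2 * b) * (x ^ 1 * Real.exp (-b * x ^ 2))) x := by
    intro x
    have h : HasDerivAt (fun x : ℝ => Real.exp (-b * x ^ 2))
        (Real.exp (-b * x ^ 2) * (-b * (2 * x))) x := by
      simpa using ((hasDerivAt_pow 2 x).const_mul (-b)).exp
    convert h using 1
    ring
  have h0 := integral_eq_zero_of_hasDerivAt_of_integrable hder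
    ((integrable_pow_gauss hb 1).const_mul _) (integrable_exp_neg_mul_sq hb)
  rw [integral_const_mul] at h0
  have hb' : (-2 : ℝ) * b ≠ 0 := by
    intro h; nlinarith
  have := (mul_eq_zero.mp h0).resolve_left hb'
  simpa [gaussMoment] using this

lemma gaussMoment_zero {b : ℝ} (hb : 0 < b) : gaussMoment b 0 = Real.sqrt (π / b) := by
  simpa [gaussMoment] using integral_gaussian b

lemma integral_poly_gauss {b : ℝ} (hb : 0 < b) (c : ℕ → ℝ) :
    ∫ x : ℝ, (∑ i ∈ Finset.range 7, c i * x ^ i) * Real.exp (-b * x ^ 2)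
      = ∑ i ∈ Finset.range 7, c i * gaussMoment b i := by
  have h : (fun x : ℝ => (∑ i ∈ Finset.range 7, c i * x ^ i) * Real.exp (-b * x ^ 2))
      = fun x : ℝ => ∑ i ∈ Finset.range 7, c i * (x ^ i * Real.exp (-b * x ^ 2)) := by
    funext x
    rw [Finset.sum_mul]
    exact Finset.sum_congr rfl fun i _ => by ring
  rw [h, integral_finset_sum _ fun i _ => (integrable_pow_gauss hb i).const_mul (c i)]
  simp_rw [integral_const_mul]
  rfl

/-- The Weyl 1-form φ_i = (1/2) C_{ijk} g^{jk} of the univariate Gaussian family in the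
coordinates (μ, σ²): its μ-component vanishes and its σ²-component equals 3/(2σ²), where
diag(σ², 2σ⁴) is the inverse Fisher metric. -/
theorem gaussian_weyl_one_form (μ σ : ℝ) (hσ : 0 < σ) :
    (1 / 2) * ((∫ x : ℝ, score1 μ σ x ^ 3 * gaussPdf μ σ x) * σ ^ 2
        + (∫ x : ℝ, score1 μ σ x * score2 μ σ x ^ 2 * gaussPdf μ σ x) * (2 * σ ^ 4)) = 0
    ∧ (1 / 2) * ((∫ x : ℝ, score2 μ σ x * score1 μ σ x ^ 2 * gaussPdf μ σ x) * σ ^ 2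
        + (∫ x : ℝ, score2 μ σ x ^ 3 * gaussPdf μ σ x) * (2 * σ ^ 4)) = 3 / (2 * σ ^ 2) := by
  have hσ0 : σ ≠ 0 := hσ.ne'
  have hπ : (0:ℝ) < 2 * π := by positivity
  have hs : (0:ℝ) < Real.sqrt (2 * π) := Real.sqrt_pos.mpr hπ
  obtain ⟨b, hbdef⟩ : ∃ b : ℝ, b = 1 / (2 * σ ^ 2) := ⟨_, rfl⟩
  have hb : 0 < b := by rw [hbdef]; positivity
  obtain ⟨S, hSdef⟩ : ∃ S : ℝ, S = Real.sqrt (2 * π) * σ := ⟨_, rfl⟩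
  have hS : 0 < S := by rw [hSdef]; positivity
  have m0 : gaussMoment b 0 = S := by
    rw [gaussMoment_zero hb, show π / b = (2 * π) * σ ^ 2 by rw [hbdef]; field_simp,
      Real.sqrt_mul hπ.le, Real.sqrt_sq hσ.le, hSdef]
  have m1 : gaussMoment b 1 = 0 := gaussMoment_one hb
  have m2 : gaussMoment b 2 = σ ^ 2 * S := by
    have h := gaussMoment_step hb 0
    rw [m0, hbdef] at h
    push_cast at h
    field_simp at h
    rw [← hbdef] at h
    linear_combination h
  have m3 : gaussMoment b 3 = 0 := by
    have h := gaussMoment_step hb 1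
    rw [m1] at h
    have h' : (2 * b) * gaussMoment b 3 = 0 := by push_cast at h; linarith
    exact (mul_eq_zero.mp h').resolve_left (by positivity)
  have m4 : gaussMoment b 4 = 3 * σ ^ 4 * S := by
    have h := gaussMoment_step hb 2
    rw [m2, hbdef] at h
    push_cast at h
    field_simp at h
    rw [← hbdef] at h
    linear_combination h
  have m5 : gaussMoment b 5 = 0 := by
    have h := gaussMoment_step hb 3
    rw [m3] at h
    have h' : (2 * b) * gaussMoment b 5 = 0 := by push_cast at h; linarith
    exact (mul_eq_zero.mp h').resolve_left (by positivity)
  have m6 : gaussMoment b 6 = 15 * σ ^ 6 * S := by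
    have h := gaussMoment_step hb 4
    rw [m4, hbdef] at h
    push_cast at h
    field_simp at h
    rw [← hbdef] at h
    linear_combination h
  have key : ∀ (c : ℕ → ℝ) (f : ℝ → ℝ),
      (∀ x : ℝ, f x = (∑ i ∈ Finset.range 7, c i * (x - μ) ^ i) * Real.exp (-b * (x - μ) ^ 2)) →
      (∫ x : ℝ, f x) = ∑ i ∈ Finset.range 7, c i * gaussMoment b i := by
    intro c f hf
    rw [show f = fun x : ℝ =>
        (fun t : ℝ => (∑ i ∈ Finset.range 7, c i * t ^ i) * Real.exp (-b * t ^ 2)) (x - μ)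
      from funext fun x => hf x]
    rw [integral_sub_right_eq_self
      (fun t : ℝ => (∑ i ∈ Finset.range 7, c i * t ^ i) * Real.exp (-b * t ^ 2)) μ]
    exact integral_poly_gauss hb c
  have hexp : ∀ x : ℝ, Real.exp (-(x - μ) ^ 2 / (2 * σ ^ 2)) = Real.exp (-b * (x - μ) ^ 2) := by
    intro x; congr 1; rw [hbdef]; ring
  have e1 : (∫ x : ℝ, score1 μ σ x ^ 3 * gaussPdf μ σ x) = 0 := by
    rw [key (fun i => if i = 3 then 1 / (σ ^ 6 * S) else 0) _ ?_]
    · simp [Finset.sum_range_succ, m1, m3]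
    · intro x
      simp only [score1, gaussPdf, hexp x, Finset.sum_range_succ, Finset.sum_range_zero]
      rw [hSdef]
      generalize Real.exp (-b * (x - μ) ^ 2) = E
      norm_num
      field_simp
      try ring
      try tauto
  have e2 : (∫ x : ℝ, score1 μ σ x * score2 μ σ x ^ 2 * gaussPdf μ σ x) = 0 := by
    rw [key (fun i => if i = 1 then 1 / (4 * σ ^ 6 * S) else if i = 3 then -(1 / (2 * σ ^ 8 * S))
        else if i = 5 then 1 / (4 * σ ^ 10 * S) else 0) _ ?_]
    · simp [Finset.sum_range_succ, m1, m3, m5]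
    · intro x
      simp only [score1, score2, gaussPdf, hexp x, Finset.sum_range_succ, Finset.sum_range_zero]
      rw [hSdef]
      generalize Real.exp (-b * (x - μ) ^ 2) = E
      norm_num
      field_simp
      try ring
      try tauto
  have e3 : (∫ x : ℝ, score2 μ σ x * score1 μ σ x ^ 2 * gaussPdf μ σ x) = 1 / σ ^ 4 := by
    rw [key (fun i => if i = 2 then -(1 / (2 * σ ^ 6 * S)) else if i = 4 then 1 / (2 * σ ^ 8 * S)
        else 0) _ ?_]
    · simp only [Finset.sum_range_succ, Finset.sum_range_zero, m0, m1, m2, m3, m4]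
      norm_num
      field_simp
      try ring
      try tauto
    · intro x
      simp only [score1, score2, gaussPdf, hexp x, Finset.sum_range_succ, Finset.sum_range_zero]
      rw [hSdef]
      generalize Real.exp (-b * (x - μ) ^ 2) = E
      norm_num
      field_simp
      try ring
      try tauto
  have e4 : (∫ x : ℝ, score2 μ σ x ^ 3 * gaussPdf μ σ x) = 1 / σ ^ 6 := by
    rw [key (fun i => if i = 0 then -(1 / (8 * σ ^ 6 * S)) else if i = 2 then 3 / (8 * σ ^ 8 * S)
        else if i = 4 then -(3 / (8 * σ ^ 10 * S)) else if i = 6 then 1 / (8 * σ ^ 12 * S)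
        else 0) _ ?_]
    · simp only [Finset.sum_range_succ, Finset.sum_range_zero, m0, m1, m2, m3, m4, m5, m6]
      norm_num
      field_simp
      try ring
      try tauto
    · intro x
      simp only [score1, score2, gaussPdf, hexp x, Finset.sum_range_succ, Finset.sum_range_zero]
      rw [hSdef]
      generalize Real.exp (-b * (x - μ) ^ 2) = E
      norm_num
      field_simp
      try ring
      try tauto
  rw [e1, e2, e3, e4]
  constructor
  · norm_num
  · field_simp
    ring
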